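/- Let n ∈ ℕ and let α be a partial map on {0,1,...,n−1} whose domain has at least 3 elements and contains 0. Then the following are equivalent: (a) α is a partial isometry of the star graph S_n; (b) α is injective and 0α = 0; (c) the restriction of α to its domain minus {0} is an injective partial map on {1,2,...,n−1} and 0α = 0. -/

import Mathlib

namespace DPSPaper

instance instMonoidPFun {V : Type*} : Monoid (V →. V) where
  mul f g := g.comp f
  one := PFun.id V
  mul_assoc a b c := (PFun.comp_assoc c b a).symm
  one_mul := PFun.comp_id
  mul_one := PFun.id_comp

/-- The geodesic distance in the star graph `S_n` on vertices `{0,1,...,n-1}`. -/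
def starDist (n : ℕ) (x y : Fin n) : ℕ :=
  if x = y then 0 else if (x : ℕ) = 0 ∨ (y : ℕ) = 0 then 1 else 2

/-- Injectivity of a partial map. -/
def PInj {n : ℕ} (α : Fin n →. Fin n) : Prop :=
  ∀ ⦃x y a : Fin n⦄, a ∈ α x → a ∈ α y → x = y

/-- `α` is a partial isometry of the star graph `S_n`. -/
def IsStarPI {n : ℕ} (α : Fin n →. Fin n) : Prop :=
  PInj α ∧ ∀ ⦃x y u v : Fin n⦄, u ∈ α x → v ∈ α y → starDist n u v = starDist n x y

/-- The set of all partial isometries of `S_n`. -/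
def DPSset (n : ℕ) : Set (Fin n →. Fin n) := { α | IsStarPI α }

/-- The restriction of `α` to its domain minus `{0}`. -/
def delZero {n : ℕ} [NeZero n] (α : Fin n →. Fin n) : Fin n →. Fin n :=
  fun x => if x = 0 then Part.none else α x

lemma mem_delZero {n : ℕ} [NeZero n] (α : Fin n →. Fin n) (x a : Fin n) :
    a ∈ delZero α x ↔ x ≠ 0 ∧ a ∈ α x := by
  unfold delZero
  split_ifs with h <;> simp [h]

lemma starDist_self (n : ℕ) (x : Fin n) : starDist n x x = 0 := by
  simp [starDist]

lemma starDist_zero {n : ℕ} [NeZero n] (x : Fin n) (hx : x ≠ 0) :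
    starDist n 0 x = 1 := by
  simp [starDist, hx.symm]

lemma starDist_zero' {n : ℕ} [NeZero n] (x : Fin n) (hx : x ≠ 0) :
    starDist n x 0 = 1 := by
  simp [starDist, hx]

lemma starDist_two {n : ℕ} [NeZero n] (x y : Fin n) (hx : x ≠ 0) (hy : y ≠ 0)
    (hxy : x ≠ y) : starDist n x y = 2 := by
  have hx' : (x : ℕ) ≠ 0 := fun h => hx (Fin.ext (by simp [h]))
  have hy' : (y : ℕ) ≠ 0 := fun h => hy (Fin.ext (by simp [h]))
  simp [starDist, hxy, hx', hy']

theorem statement3 (n : ℕ) [NeZero n] (α : Fin n →. Fin n)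
    (hcard : 3 ≤ α.Dom.ncard) (h0 : (0 : Fin n) ∈ α.Dom) :
    (IsStarPI α ↔ (PInj α ∧ (0 : Fin n) ∈ α 0)) ∧
    (IsStarPI α ↔
      (PInj (delZero α) ∧ (∀ x ∈ (delZero α).Dom, x ≠ (0 : Fin n)) ∧
        (∀ y ∈ (delZero α).ran, y ≠ (0 : Fin n)) ∧ (0 : Fin n) ∈ α 0)) := by
  have hfin : α.Dom.Finite := Set.toFinite _
  -- there exist two distinct nonzero elements of the domain
  have hsub : (2 : ℕ) ≤ (α.Dom \ {(0 : Fin n)}).ncard := by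
    have h1 : (α.Dom \ {(0 : Fin n)}).ncard + 1 = α.Dom.ncard :=
      Set.ncard_diff_singleton_add_one h0 hfin
    omega
  have h2 : ∃ a b, a ∈ (α.Dom \ {(0 : Fin n)}) ∧ b ∈ (α.Dom \ {(0 : Fin n)}) ∧ a ≠ b :=
    (Set.one_lt_ncard_iff (hfin.diff : (α.Dom \ {(0 : Fin n)}).Finite)).mp (by omega)
  obtain ⟨x, y, hx, hy, hxy⟩ := h2
  obtain ⟨hxd, hx0⟩ := hx
  obtain ⟨hyd, hy0⟩ := hy
  simp only [Set.mem_singleton_iff] at hx0 hy0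
  obtain ⟨a, ha⟩ : ∃ a, a ∈ α 0 := (PFun.mem_dom α 0).mp h0
  obtain ⟨u, hu⟩ : ∃ u, u ∈ α x := (PFun.mem_dom α x).mp hxd
  obtain ⟨v, hv⟩ : ∃ v, v ∈ α y := (PFun.mem_dom α y).mp hyd
  have key : IsStarPI α ↔ (PInj α ∧ (0 : Fin n) ∈ α 0) := by
    constructor
    · rintro ⟨hinj, hd⟩
      refine ⟨hinj, ?_⟩
      have h2 : starDist n u v = 2 := by
        rw [hd hu hv]; exact starDist_two x y hx0 hy0 hxy
      have hu0 : u ≠ 0 := by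
        intro h; subst h
        rw [show starDist n 0 v = if 0 = v then 0 else 1 by simp [starDist]] at h2
        split_ifs at h2; omega
      have h1 : starDist n a u = 1 := by
        rw [hd ha hu]; exact starDist_zero x hx0
      have ha0 : a = 0 := by
        by_contra hne
        have := starDist_two a u hne hu0 (by rintro rfl; simp [starDist_self] at h1)
        omega
      rwa [ha0] at ha
    · rintro ⟨hinj, h00⟩
      refine ⟨hinj, ?_⟩
      intro p q w z hw hz
      by_cases hpq : p = q
      · subst hpq
        have : w = z := Part.mem_unique hw hz
        subst this
        simp [starDist_self]
      · have hwz : w ≠ z := fun h => hpq (hinj hw (h ▸ hz))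
        have hnz : ∀ r s : Fin n, s ∈ α r → r ≠ 0 → s ≠ 0 := by
          intro r s hs hr h
          subst h
          exact hr (hinj hs h00)
        by_cases hp : p = 0
        · subst hp
          have : w = 0 := Part.mem_unique hw h00
          subst this
          rw [starDist_zero q (fun h => hpq h.symm), starDist_zero z (fun h => hwz h.symm)]
        · by_cases hq : q = 0
          · subst hq
            have : z = 0 := Part.mem_unique hz h00
            subst this
            rw [starDist_zero' p hp, starDist_zero' w (hnz p w hw hp)]
          · rw [starDist_two p q hp hq hpq,
              starDist_two w z (hnz p w hw hp) (hnz q z hz hq) hwz]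
  refine ⟨key, key.trans ?_⟩
  constructor
  · rintro ⟨hinj, h00⟩
    refine ⟨?_, ?_, ?_, h00⟩
    · intro p q b hb hb'
      rw [mem_delZero] at hb hb'
      exact hinj hb.2 hb'.2
    · intro p hp
      obtain ⟨b, hb⟩ := (PFun.mem_dom _ p).mp hp
      exact ((mem_delZero α p b).mp hb).1
    · intro b hb
      obtain ⟨p, hp⟩ : ∃ p, b ∈ delZero α p := hb
      rw [mem_delZero] at hp
      intro h
      exact hp.1 (hinj (h ▸ hp.2) h00)
  · rintro ⟨hinj, _, hran, h00⟩
    refine ⟨?_, h00⟩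
    intro p q b hb hb'
    have hr : ∀ r : Fin n, r ≠ 0 → b ∈ α r → b ≠ 0 := by
      intro r hr hbr
      exact hran b ⟨r, (mem_delZero α r b).mpr ⟨hr, hbr⟩⟩
    by_cases hp : p = 0 <;> by_cases hq : q = 0
    · rw [hp, hq]
    · exact absurd (Part.mem_unique (hp ▸ hb) h00) (hr q hq hb')
    · exact absurd (Part.mem_unique (hq ▸ hb') h00) (hr p hp hb)
    · exact hinj ((mem_delZero α p b).mpr ⟨hp, hb⟩) ((mem_delZero α q b).mpr ⟨hq, hb'⟩)

end DPSPaper
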